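/- The power series Σ_{n=1}^∞ c_n s^n with real coefficients c_n = Γ(3n/2 − 1)/(Γ(n/2) · n! · 3^{n−1}) has radius of convergence exactly 2/√3; equivalently, lim_{n→∞} (c_n)^{1/n} = √3/2. -/

import Mathlib

open Filter Topology


/-- The coefficients `c_n = Γ(3n/2 − 1)/(Γ(n/2)·n!·3^{n−1})`. -/
noncomputable def cCoef (n : ℕ) : ℝ :=
  Real.Gamma (3 * n / 2 - 1) / (Real.Gamma (n / 2) * n.factorial * 3 ^ (n - 1))

noncomputable def rr (n : ℕ) : ℝ := (3*(n:ℝ)+2) * (3*n-2) / (12*(n+1)*(n+2))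

lemma rr_pos {n : ℕ} (hn : 1 ≤ n) : 0 < rr n := by
  have : (1:ℝ) ≤ n := by exact_mod_cast hn
  unfold rr
  have h1 : (0:ℝ) < 3*(n:ℝ)+2 := by nlinarith
  have h2 : (0:ℝ) < 3*(n:ℝ)-2 := by nlinarith
  positivity

lemma rr_tendsto : Tendsto rr atTop (𝓝 (3/4)) := by
  have h0 : Tendsto (fun n : ℕ => ((n:ℝ))⁻¹) atTop (𝓝 0) := tendsto_inv_atTop_nhds_zero_nat
  have hnum : Tendsto (fun n : ℕ => (3+2*((n:ℝ))⁻¹)*(3-2*((n:ℝ))⁻¹)) atTop (𝓝 9) := by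
    have h1 : Tendsto (fun n : ℕ => 3+2*((n:ℝ))⁻¹) atTop (𝓝 (3+2*0)) :=
      tendsto_const_nhds.add (h0.const_mul 2)
    have h2 : Tendsto (fun n : ℕ => 3-2*((n:ℝ))⁻¹) atTop (𝓝 (3-2*0)) :=
      tendsto_const_nhds.sub (h0.const_mul 2)
    have := h1.mul h2
    norm_num at this
    exact this
  have hden : Tendsto (fun n : ℕ => 12*(1+((n:ℝ))⁻¹)*(1+2*((n:ℝ))⁻¹)) atTop (𝓝 12) := by
    have h1 : Tendsto (fun n : ℕ => 12*(1+((n:ℝ))⁻¹)) atTop (𝓝 (12*(1+0))) :=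
      tendsto_const_nhds.mul (tendsto_const_nhds.add h0)
    have h2 : Tendsto (fun n : ℕ => 1+2*((n:ℝ))⁻¹) atTop (𝓝 (1+2*0)) :=
      tendsto_const_nhds.add (h0.const_mul 2)
    have := h1.mul h2
    norm_num at this
    exact this
  have hd := hnum.div hden (by norm_num : (12:ℝ) ≠ 0)
  have h34 : (9:ℝ)/12 = 3/4 := by norm_num
  rw [h34] at hd
  apply hd.congr'
  filter_upwards [eventually_ge_atTop 1] with n hn
  have hn' : (n:ℝ) ≠ 0 := Nat.cast_ne_zero.mpr (by omega)
  unfold rr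
  simp only [Pi.div_apply]
  field_simp

lemma cCoef_pos {n : ℕ} (hn : 1 ≤ n) : 0 < cCoef n := by
  have h1 : (0:ℝ) < 3 * n / 2 - 1 := by
    have : (1:ℝ) ≤ n := by exact_mod_cast hn
    nlinarith
  have h2 : (0:ℝ) < (n:ℝ) / 2 := by positivity
  unfold cCoef
  positivity

lemma cCoef_ratio {n : ℕ} (hn : 1 ≤ n) : cCoef (n + 2) = rr n * cCoef n := by
  have hn1 : (1:ℝ) ≤ n := by exact_mod_cast hn
  have hx : (0:ℝ) < 3 * n / 2 - 1 := by nlinarith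
  have hA : ((3:ℝ) * (↑(n+2)) / 2 - 1) = ((3 * (n:ℝ) / 2 - 1) + 1 + 1) + 1 := by
    push_cast; ring
  have hB : ((↑(n+2)):ℝ) / 2 = (n:ℝ)/2 + 1 := by push_cast; ring
  have e1 : Real.Gamma ((3 * (n:ℝ) / 2 - 1) + 1) = (3 * n / 2 - 1) * Real.Gamma (3 * n / 2 - 1) :=
    Real.Gamma_add_one hx.ne'
  have e2 : Real.Gamma ((3 * (n:ℝ) / 2 - 1) + 1 + 1)
      = (3 * n / 2 - 1 + 1) * Real.Gamma (3 * n / 2 - 1 + 1) :=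
    Real.Gamma_add_one (by nlinarith)
  have e3 : Real.Gamma (((3 * (n:ℝ) / 2 - 1) + 1 + 1) + 1)
      = (3 * n / 2 - 1 + 1 + 1) * Real.Gamma (3 * n / 2 - 1 + 1 + 1) :=
    Real.Gamma_add_one (by nlinarith)
  have e4 : Real.Gamma ((n:ℝ)/2 + 1) = ((n:ℝ)/2) * Real.Gamma ((n:ℝ)/2) :=
    Real.Gamma_add_one (by positivity)
  have hfac : ((n+2).factorial : ℝ) = ((n:ℝ)+2) * ((n:ℝ)+1) * n.factorial := by
    rw [Nat.factorial_succ, Nat.factorial_succ]; push_cast; ring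
  have hpow : (3:ℝ) ^ (n + 2 - 1) = 9 * 3 ^ (n - 1) := by
    have h : n + 2 - 1 = (n - 1) + 2 := by omega
    rw [h, pow_add]; ring
  have hBpos : (0:ℝ) < Real.Gamma ((n:ℝ)/2) := Real.Gamma_pos_of_pos (by positivity)
  have hFpos : (0:ℝ) < (n.factorial : ℝ) := by exact_mod_cast n.factorial_pos
  have hPpos : (0:ℝ) < (3:ℝ) ^ (n - 1) := by positivity
  unfold cCoef rr
  rw [hA, hB, e3, e2, e1, e4, hfac, hpow]
  have hnpos : (0:ℝ) < n := by linarith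
  field_simp
  ring

lemma tendsto_two_mul_add (o : ℕ) : Tendsto (fun m : ℕ => 2*m+o) atTop atTop :=
  tendsto_atTop_atTop.mpr fun b => ⟨b, fun a ha => by omega⟩

lemma aux_root (o : ℕ) (ho : 1 ≤ o) :
    Tendsto (fun m : ℕ => cCoef (2*m+o) ^ (((2*m+o : ℕ) : ℝ))⁻¹) atTop
      (𝓝 (Real.sqrt 3 / 2)) := by
  set L : ℝ := Real.log (3/4) with hL
  -- differences of logs tend to L
  have hd : Tendsto (fun m : ℕ => Real.log (cCoef (2*(m+1)+o)) - Real.log (cCoef (2*m+o)))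
      atTop (𝓝 L) := by
    have hcomp : Tendsto (fun m : ℕ => rr (2*m+o)) atTop (𝓝 (3/4)) :=
      rr_tendsto.comp (tendsto_two_mul_add o)
    have hlog : Tendsto (fun m : ℕ => Real.log (rr (2*m+o))) atTop (𝓝 L) :=
      (Real.continuousAt_log (by norm_num)).tendsto.comp hcomp
    apply hlog.congr
    intro m
    have h1 : 1 ≤ 2*m+o := by omega
    have h2 : 2*(m+1)+o = (2*m+o) + 2 := by omega
    rw [h2, cCoef_ratio h1, Real.log_mul (rr_pos h1).ne' (cCoef_pos h1).ne']
    ring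
  -- Cesàro
  have hc := hd.cesaro
  have htel : ∀ m : ℕ, ∑ i ∈ Finset.range m,
      (Real.log (cCoef (2*(i+1)+o)) - Real.log (cCoef (2*i+o)))
      = Real.log (cCoef (2*m+o)) - Real.log (cCoef (2*0+o)) := by
    intro m
    exact Finset.sum_range_sub (fun i => Real.log (cCoef (2*i+o))) m
  simp only [htel] at hc
  -- now (m)⁻¹ * (log c(2m+o) - log c o) → L ; deduce log c(2m+o)/(2m+o) → L/2
  have hhalf : Tendsto (fun m : ℕ => (m:ℝ)/(2*m+o)) atTop (𝓝 (1/2)) := by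
    have h0 : Tendsto (fun m : ℕ => ((m:ℝ))⁻¹) atTop (𝓝 0) := tendsto_inv_atTop_nhds_zero_nat
    have h1 : Tendsto (fun m : ℕ => 2+o*((m:ℝ))⁻¹) atTop (𝓝 (2+o*0)) :=
      tendsto_const_nhds.add (h0.const_mul _)
    have h2 := (tendsto_const_nhds.div h1 (by norm_num) :
      Tendsto (fun m : ℕ => 1/(2+o*((m:ℝ))⁻¹)) atTop (𝓝 (1/(2+o*0))))
    norm_num at h2
    apply h2.congr'
    filter_upwards [eventually_ge_atTop 1] with m hm
    have hm' : (m:ℝ) ≠ 0 := Nat.cast_ne_zero.mpr (by omega)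
    have hden : (0:ℝ) < 2*(m:ℝ)+o := by positivity
    simp only [Pi.div_apply]
    field_simp
  have hz : Tendsto (fun m : ℕ => Real.log (cCoef (2*0+o)) * ((2*(m:ℝ)+o))⁻¹) atTop (𝓝 0) := by
    have : Tendsto (fun m : ℕ => ((2*(m:ℝ)+o))⁻¹) atTop (𝓝 0) := by
      apply Tendsto.comp tendsto_inv_atTop_zero
      apply tendsto_atTop_atTop.mpr
      intro b
      exact ⟨Nat.ceil (max 0 b), fun a ha => by
        have : (max 0 b : ℝ) ≤ a := le_trans (Nat.le_ceil _) (by exact_mod_cast ha)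
        have hb : b ≤ (a:ℝ) := le_trans (le_max_right 0 b) this
        have : (0:ℝ) ≤ (o:ℝ) := by positivity
        nlinarith [Nat.cast_nonneg (α := ℝ) a]⟩
    simpa using this.const_mul (Real.log (cCoef (2*0+o)))
  have hmain : Tendsto (fun m : ℕ => Real.log (cCoef (2*m+o)) / (2*(m:ℝ)+o)) atTop
      (𝓝 (L/2)) := by
    have hprod : Tendsto (fun m : ℕ =>
        ((m:ℝ)⁻¹ * (Real.log (cCoef (2*m+o)) - Real.log (cCoef (2*0+o)))) * ((m:ℝ)/(2*m+o))
        + Real.log (cCoef (2*0+o)) * ((2*(m:ℝ)+o))⁻¹) atTop (𝓝 (L * (1/2) + 0)) :=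
      (hc.mul hhalf).add hz
    have heq : L * (1/2) + 0 = L/2 := by ring
    rw [heq] at hprod
    apply hprod.congr'
    filter_upwards [eventually_ge_atTop 1] with m hm
    have hm' : (m:ℝ) ≠ 0 := Nat.cast_ne_zero.mpr (by omega)
    have hden : (2*(m:ℝ)+o) ≠ 0 := by positivity
    field_simp
    ring
  -- exponentiate
  have hexp := (Real.continuous_exp.tendsto _).comp hmain
  have hval : Real.exp (L/2) = Real.sqrt 3 / 2 := by
    rw [hL]
    rw [show Real.log (3/4) / 2 = Real.log (3/4) * (2:ℝ)⁻¹ by ring]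
    rw [← Real.rpow_def_of_pos (by norm_num : (0:ℝ) < 3/4)]
    rw [show ((2:ℝ))⁻¹ = 1/2 by norm_num, ← Real.sqrt_eq_rpow]
    rw [Real.sqrt_div (by norm_num : (0:ℝ) ≤ 3) 4]
    rw [show (4:ℝ) = 2^2 by norm_num, Real.sqrt_sq (by norm_num : (0:ℝ) ≤ 2)]
  rw [← hval]
  apply hexp.congr
  intro m
  have h1 : 1 ≤ 2*m+o := by omega
  have hpos := cCoef_pos h1
  simp only [Function.comp]
  rw [Real.rpow_def_of_pos hpos]
  congr 1
  push_cast
  ring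

lemma tendsto_of_even_odd {a : ℕ → ℝ} {l : ℝ}
    (he : Tendsto (fun m : ℕ => a (2*m+2)) atTop (𝓝 l))
    (ho : Tendsto (fun m : ℕ => a (2*m+1)) atTop (𝓝 l)) :
    Tendsto a atTop (𝓝 l) := by
  rw [Metric.tendsto_atTop] at he ho ⊢
  intro ε hε
  obtain ⟨N1, h1⟩ := he ε hε
  obtain ⟨N2, h2⟩ := ho ε hε
  refine ⟨2*(N1+N2)+2, fun n hn => ?_⟩
  rcases Nat.even_or_odd n with ⟨m, hm⟩ | ⟨m, hm⟩
  · have hn' : n = 2*(m-1)+2 := by omega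
    rw [hn']
    exact h1 _ (by omega)
  · have hn' : n = 2*m+1 := by omega
    rw [hn']
    exact h2 _ (by omega)

lemma root_tendsto :
    Tendsto (fun n : ℕ => cCoef n ^ ((n : ℝ)⁻¹)) atTop (𝓝 (Real.sqrt 3 / 2)) := by
  apply tendsto_of_even_odd (aux_root 2 (by norm_num)) (aux_root 1 le_rfl)

theorem stmt1 :
    (∀ s : ℝ, |s| < 2 / Real.sqrt 3 →
      Summable fun n : ℕ => cCoef (n + 1) * s ^ (n + 1)) ∧
    (∀ s : ℝ, 2 / Real.sqrt 3 < |s| →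
      ¬ Summable fun n : ℕ => cCoef (n + 1) * s ^ (n + 1)) ∧
    Tendsto (fun n : ℕ => cCoef n ^ ((n : ℝ)⁻¹)) atTop (nhds (Real.sqrt 3 / 2)) := by
  have hs3 : (0:ℝ) < Real.sqrt 3 := Real.sqrt_pos.mpr (by norm_num)
  have hone : Real.sqrt 3 / 2 * (2 / Real.sqrt 3) = 1 := by field_simp
  have ht : ∀ s : ℝ, Tendsto (fun n : ℕ => cCoef (n+1) ^ (((n+1:ℕ) : ℝ))⁻¹ * |s|)
      atTop (𝓝 (Real.sqrt 3 / 2 * |s|)) := fun s =>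
    (root_tendsto.comp (tendsto_add_atTop_nat 1)).mul_const _
  have habs : ∀ (s : ℝ) (n : ℕ),
      ‖cCoef (n+1) * s ^ (n+1)‖ = (cCoef (n+1) ^ (((n+1:ℕ) : ℝ))⁻¹ * |s|) ^ (n+1) := by
    intro s n
    have hpos := cCoef_pos (n := n+1) (by omega)
    rw [mul_pow, Real.rpow_inv_natCast_pow hpos.le (by omega), norm_mul, norm_pow]
    simp [abs_of_pos hpos, Real.norm_eq_abs]
  refine ⟨?_, ?_, root_tendsto⟩
  · intro s hs
    have hl : Real.sqrt 3 / 2 * |s| < 1 := by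
      calc Real.sqrt 3 / 2 * |s| < Real.sqrt 3 / 2 * (2 / Real.sqrt 3) := by
            apply mul_lt_mul_of_pos_left hs (by positivity)
        _ = 1 := hone
    set q : ℝ := (Real.sqrt 3 / 2 * |s| + 1) / 2 with hq
    have hq0 : 0 ≤ q := by positivity
    have hq1 : q < 1 := by rw [hq]; linarith
    have hlq : Real.sqrt 3 / 2 * |s| < q := by rw [hq]; linarith
    have hev : ∀ᶠ n : ℕ in atTop, cCoef (n+1) ^ (((n+1:ℕ) : ℝ))⁻¹ * |s| < q :=
      (ht s).eventually_lt_const hlq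
    apply Summable.of_norm_bounded_eventually_nat (g := fun n => q ^ n)
      (summable_geometric_of_lt_one hq0 hq1)
    filter_upwards [hev] with n hn
    rw [habs s n]
    have hnn : 0 ≤ cCoef (n+1) ^ (((n+1:ℕ) : ℝ))⁻¹ * |s| :=
      mul_nonneg (Real.rpow_nonneg (cCoef_pos (n := n+1) (by omega)).le _) (abs_nonneg s)
    calc (cCoef (n+1) ^ (((n+1:ℕ) : ℝ))⁻¹ * |s|) ^ (n+1) ≤ q ^ (n+1) := by
          apply pow_le_pow_left₀ hnn hn.le
      _ ≤ q ^ n := by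
          rw [pow_succ]
          nlinarith [pow_nonneg hq0 n]
  · intro s hs hsum
    have hl : 1 < Real.sqrt 3 / 2 * |s| := by
      calc (1:ℝ) = Real.sqrt 3 / 2 * (2 / Real.sqrt 3) := hone.symm
        _ < Real.sqrt 3 / 2 * |s| := by
            apply mul_lt_mul_of_pos_left hs (by positivity)
    have hev : ∀ᶠ n : ℕ in atTop, 1 < cCoef (n+1) ^ (((n+1:ℕ) : ℝ))⁻¹ * |s| :=
      (ht s).eventually_const_lt hl
    have hzero := hsum.tendsto_atTop_zero
    have hev2 : ∀ᶠ n : ℕ in atTop, ‖cCoef (n+1) * s ^ (n+1)‖ < 1 := by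
      have h := hzero.norm
      rw [norm_zero] at h
      exact h.eventually_lt_const (by norm_num : (0:ℝ) < 1)
    obtain ⟨n, h1, h2⟩ := (hev.and hev2).exists
    rw [habs s n] at h2
    have hple := pow_le_pow_left₀ (by norm_num : (0:ℝ) ≤ 1) h1.le (n+1)
    rw [one_pow] at hple
    linarith
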